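/- Let p1 be a primitive polynomial of degree k1 over GF(2) and p2 a primitive polynomial of degree k2 over GF(2) with p1 ≠ p2, and let n ≥ 2·max(k1,k2). Then the truncated PR codes S(p1,n) and S(p2,n) have no nonzero codeword in common, i.e., S(p1,n) ∩ S(p2,n) = {0}. -/

import Mathlib

/-- The truncated primitive rateless (PR) code `S(p,n)` for a polynomial `p` of degree `k`
over `GF(2)`: the set of vectors `c ∈ GF(2)^n` satisfying the linear recurrence
`∑_{i=0}^k p_i c_{j+i} = 0` for every `j` with `0 ≤ j ≤ n - k - 1`. -/
def PRcode (k : ℕ) (p : Polynomial (ZMod 2)) (n : ℕ) : Set (Fin n → ZMod 2) :=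
  {c | ∀ j : ℕ, j + k < n →
    ∑ i ∈ Finset.range (k + 1), p.coeff i * (if h : j + i < n then c ⟨j + i, h⟩ else 0) = 0}

/-- `p` is a primitive polynomial of degree `k` over `GF(2)`: it is the minimal polynomial of
some element `α` of `GF(2^k)` of multiplicative order `2^k - 1`. -/
def IsPrimitivePoly (k : ℕ) (p : Polynomial (ZMod 2)) : Prop :=
  ∃ α : GaloisField 2 k, orderOf α = 2 ^ k - 1 ∧ p = minpoly (ZMod 2) α

open Polynomial Finset IntermediateField

lemma zmod2_eq_one {a : ZMod 2} (h : a ≠ 0) : a = 1 := by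
  revert h; revert a; decide

lemma primitive_facts {k : ℕ} (hk : 1 ≤ k) {p : Polynomial (ZMod 2)}
    (h : IsPrimitivePoly k p) :
    p.Monic ∧ p.natDegree = k ∧ Irreducible p ∧ p.coeff 0 = 1 := by
  obtain ⟨α, hord, rfl⟩ := h
  have hint : IsIntegral (ZMod 2) α := IsIntegral.of_finite _ _
  have hmon := minpoly.monic hint
  have hirr := minpoly.irreducible hint
  have h2k : 2 ≤ 2 ^ k := by
    calc 2 = 2 ^ 1 := by norm_num
    _ ≤ 2 ^ k := Nat.pow_le_pow_right (by norm_num) hk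
  have hα0 : α ≠ 0 := by
    intro h0
    have h1 := pow_orderOf_eq_one α
    rw [hord, h0, zero_pow (by omega)] at h1
    exact zero_ne_one h1
  have hdpos : 0 < (minpoly (ZMod 2) α).natDegree := minpoly.natDegree_pos hint
  have hdeg : (minpoly (ZMod 2) α).natDegree = k := by
    have hle : (minpoly (ZMod 2) α).natDegree ≤ k := by
      have := minpoly.natDegree_le (A := ZMod 2) α
      rwa [GaloisField.finrank 2 (by omega)] at this
    have hge : k ≤ (minpoly (ZMod 2) α).natDegree := by
      set d := (minpoly (ZMod 2) α).natDegree with hd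
      haveI := IntermediateField.adjoin.finiteDimensional hint
      have hfr : Module.finrank (ZMod 2) (ZMod 2)⟮α⟯ = d :=
        IntermediateField.adjoin.finrank hint
      haveI : Fintype ((ZMod 2)⟮α⟯) := Fintype.ofFinite _
      have hcard : Fintype.card ((ZMod 2)⟮α⟯) = 2 ^ d := by
        have := Module.card_eq_pow_finrank (K := ZMod 2) (V := (ZMod 2)⟮α⟯)
        rwa [ZMod.card, hfr] at this
      set β : (ZMod 2)⟮α⟯ := IntermediateField.AdjoinSimple.gen (ZMod 2) α with hβ
      have hβval : (β : GaloisField 2 k) = α := rfl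
      have hβord : orderOf β = 2 ^ k - 1 := by
        have h := orderOf_injective ((ZMod 2)⟮α⟯.toSubfield.subtype).toMonoidHom
          Subtype.val_injective β
        rw [← h]
        exact hord
      have hβ0 : β ≠ 0 := by
        intro h0
        apply hα0
        rw [← hβval, h0, ZeroMemClass.coe_zero]
      classical
      have hdvd : orderOf β ∣ Fintype.card ((ZMod 2)⟮α⟯) - 1 := by
        have h1 : orderOf (Units.mk0 β hβ0) ∣ Fintype.card ((ZMod 2)⟮α⟯)ˣ :=
          orderOf_dvd_card
        rw [Fintype.card_units] at h1
        rwa [← orderOf_units, Units.val_mk0] at h1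
      rw [hβord, hcard] at hdvd
      have hdle : 2 ^ k - 1 ≤ 2 ^ d - 1 := by
        apply Nat.le_of_dvd _ hdvd
        have : 2 ≤ 2 ^ d := by
          calc 2 = 2 ^ 1 := by norm_num
          _ ≤ 2 ^ d := Nat.pow_le_pow_right (by norm_num) hdpos
        omega
      have : 2 ^ k ≤ 2 ^ d := by omega
      exact (Nat.pow_le_pow_iff_right one_lt_two).mp this
    omega
  refine ⟨hmon, hdeg, hirr, ?_⟩
  apply zmod2_eq_one
  intro hc
  obtain ⟨q, hq⟩ : (X : Polynomial (ZMod 2)) ∣ minpoly (ZMod 2) α := X_dvd_iff.mpr hc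
  have haev := minpoly.aeval (ZMod 2) α
  rw [hq, map_mul, aeval_X] at haev
  have hq0 : (Polynomial.aeval α) q = 0 := by
    rcases mul_eq_zero.mp haev with h' | h'
    · exact absurd h' hα0
    · exact h'
  have hqne : q ≠ 0 := by
    intro h0
    rw [h0, mul_zero] at hq
    exact hmon.ne_zero hq
  have hdle := minpoly.degree_le_of_ne_zero (ZMod 2) α hqne hq0
  have hXne : (X : Polynomial (ZMod 2)) ≠ 0 := X_ne_zero
  have hnd : (minpoly (ZMod 2) α).natDegree = 1 + q.natDegree := by
    rw [hq, natDegree_mul hXne hqne, natDegree_X]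
  have hdle' : (minpoly (ZMod 2) α).natDegree ≤ q.natDegree :=
    natDegree_le_natDegree hdle
  omega

/-- If all coefficients of `p * q` below `n` vanish, `p.coeff 0 = 1`, and `q` has no
coefficients at or above `n`, then `q = 0`. -/
lemma elim_low (p q : Polynomial (ZMod 2)) (h0 : p.coeff 0 = 1) (n : ℕ)
    (hq : ∀ m, n ≤ m → q.coeff m = 0)
    (h : ∀ m, m < n → (p * q).coeff m = 0) : q = 0 := by
  have H : ∀ m, q.coeff m = 0 := by
    intro m
    induction m using Nat.strong_induction_on with
    | _ m IH =>
      by_cases hm : n ≤ m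
      · exact hq m hm
      push_neg at hm
      have := h m hm
      rw [coeff_mul, Finset.Nat.sum_antidiagonal_eq_sum_range_succ_mk,
        Finset.sum_range_succ'] at this
      have hz : ∀ i ∈ Finset.range m,
          p.coeff (i + 1) * q.coeff (m - (i + 1)) = 0 := by
        intro i hi
        rw [Finset.mem_range] at hi
        rw [IH (m - (i + 1)) (by omega), mul_zero]
      rw [Finset.sum_congr rfl hz, Finset.sum_const_zero, zero_add,
        Nat.sub_zero, h0, one_mul] at this
      exact this
  ext m
  simp [H m]

/-- Key cancellation: if `q` satisfies the truncated recurrences of two distinct monic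
irreducible polynomials, then the low coefficients of `p1 * q` also vanish. -/
lemma cancel_low (p1 p2 : Polynomial (ZMod 2)) (k1 k2 n : ℕ)
    (hm1 : p1.Monic) (hm2 : p2.Monic)
    (hd1 : p1.natDegree = k1) (hd2 : p2.natDegree = k2)
    (hi1 : Irreducible p1) (hi2 : Irreducible p2)
    (hk1 : 1 ≤ k1) (hk2 : 1 ≤ k2)
    (hne : p1 ≠ p2) (hn : k1 + k2 ≤ n)
    (q : Polynomial (ZMod 2))
    (h1 : ∀ m, k1 ≤ m → m < n → (p1 * q).coeff m = 0)
    (h2 : ∀ m, k2 ≤ m → m < n → (p2 * q).coeff m = 0) :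
    ∀ m, m < n → (p1 * q).coeff m = 0 := by
  set A1 : Polynomial (ZMod 2) :=
    ∑ m ∈ Finset.range k1, Polynomial.C ((p1 * q).coeff m) * X ^ m with hA1
  set A2 : Polynomial (ZMod 2) :=
    ∑ m ∈ Finset.range k2, Polynomial.C ((p2 * q).coeff m) * X ^ m with hA2
  have hA1coeff : ∀ t, A1.coeff t = if t < k1 then (p1 * q).coeff t else 0 := by
    intro t
    rw [hA1, finset_sum_coeff]
    simp only [coeff_C_mul, coeff_X_pow, mul_ite, mul_one, mul_zero]
    rw [Finset.sum_ite_eq (Finset.range k1) t]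
    simp [Finset.mem_range]
  have hA2coeff : ∀ t, A2.coeff t = if t < k2 then (p2 * q).coeff t else 0 := by
    intro t
    rw [hA2, finset_sum_coeff]
    simp only [coeff_C_mul, coeff_X_pow, mul_ite, mul_one, mul_zero]
    rw [Finset.sum_ite_eq (Finset.range k2) t]
    simp [Finset.mem_range]
  have hA1deg : A1.natDegree ≤ k1 - 1 := by
    apply natDegree_le_iff_coeff_eq_zero.mpr
    intro t ht
    rw [hA1coeff t, if_neg (by omega)]
  have hA2deg : A2.natDegree ≤ k2 - 1 := by
    apply natDegree_le_iff_coeff_eq_zero.mpr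
    intro t ht
    rw [hA2coeff t, if_neg (by omega)]
  obtain ⟨B1, hB1⟩ : (X : Polynomial (ZMod 2)) ^ n ∣ p1 * q - A1 := by
    rw [X_pow_dvd_iff]
    intro t ht
    rw [coeff_sub, hA1coeff t]
    by_cases h : t < k1
    · rw [if_pos h, sub_self]
    · rw [if_neg h, h1 t (by omega) ht, sub_zero]
  obtain ⟨B2, hB2⟩ : (X : Polynomial (ZMod 2)) ^ n ∣ p2 * q - A2 := by
    rw [X_pow_dvd_iff]
    intro t ht
    rw [coeff_sub, hA2coeff t]
    by_cases h : t < k2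
    · rw [if_pos h, sub_self]
    · rw [if_neg h, h2 t (by omega) ht, sub_zero]
  have hP1 : p1 * q = A1 + X ^ n * B1 := by linear_combination hB1
  have hP2 : p2 * q = A2 + X ^ n * B2 := by linear_combination hB2
  have key : p2 * A1 - p1 * A2 = X ^ n * (p1 * B2 - p2 * B1) := by
    have : p2 * (p1 * q) = p1 * (p2 * q) := by ring
    rw [hP1, hP2] at this
    linear_combination this
  have hR : p2 * A1 - p1 * A2 = 0 := by
    by_contra hR0
    have hdvd : (X : Polynomial (ZMod 2)) ^ n ∣ p2 * A1 - p1 * A2 :=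
      ⟨p1 * B2 - p2 * B1, key⟩
    have hgen : n ≤ (p2 * A1 - p1 * A2).natDegree := by
      have := natDegree_le_of_dvd hdvd hR0
      rwa [natDegree_X_pow] at this
    have hlt : (p2 * A1 - p1 * A2).natDegree < n := by
      apply lt_of_le_of_lt (natDegree_sub_le _ _)
      apply max_lt
      · apply lt_of_le_of_lt (natDegree_mul_le)
        omega
      · apply lt_of_le_of_lt (natDegree_mul_le)
        omega
    omega
  have hEq : p2 * A1 = p1 * A2 := by linear_combination hR
  have hA1zero : A1 = 0 := by
    by_contra hA1ne
    have hprime : Prime p1 := hi1.prime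
    have hdvd : p1 ∣ p2 * A1 := ⟨A2, hEq⟩
    rcases hprime.2.2 p2 A1 hdvd with hdp | hda
    · -- p1 ∣ p2 → p1 = p2, contradiction
      have hassoc : Associated p1 p2 :=
        (hi1.associated_of_dvd hi2 hdp)
      exact hne (Polynomial.eq_of_monic_of_associated hm1 hm2 hassoc)
    · have := natDegree_le_of_dvd hda hA1ne
      omega
  intro m hmn
  have : (p1 * q).coeff m = A1.coeff m + ((X : Polynomial (ZMod 2)) ^ n * B1).coeff m := by
    rw [hP1, coeff_add]
  rw [this, hA1zero, coeff_zero, zero_add]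
  have : ((X : Polynomial (ZMod 2)) ^ n * B1).coeff m = 0 := by
    have hdvd : (X : Polynomial (ZMod 2)) ^ n ∣ X ^ n * B1 := ⟨B1, rfl⟩
    exact (X_pow_dvd_iff.mp hdvd) m hmn
  rw [this]

theorem stmt1 (k1 k2 n : ℕ) (hk1 : 1 ≤ k1) (hk2 : 1 ≤ k2)
    (hn : 2 * max k1 k2 ≤ n)
    (p1 p2 : Polynomial (ZMod 2))
    (h1 : IsPrimitivePoly k1 p1) (h2 : IsPrimitivePoly k2 p2) (hne : p1 ≠ p2) :
    PRcode k1 p1 n ∩ PRcode k2 p2 n = {0} := by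
  obtain ⟨hmon1, hdeg1, hirr1, hc01⟩ := primitive_facts hk1 h1
  obtain ⟨hmon2, hdeg2, hirr2, hc02⟩ := primitive_facts hk2 h2
  have hnk : k1 + k2 ≤ n := by
    have := le_max_left k1 k2
    have := le_max_right k1 k2
    omega
  apply Set.Subset.antisymm
  · rintro c ⟨hc1, hc2⟩
    -- reversed coefficient function
    set f : ℕ → ZMod 2 := fun m => if h : m < n then c ⟨n - 1 - m, by omega⟩ else 0 with hf
    set Cp : Polynomial (ZMod 2) :=
      ∑ m ∈ Finset.range n, Polynomial.C (f m) * X ^ m with hCp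
    have hCpcoeff : ∀ t, Cp.coeff t = f t := by
      intro t
      rw [hCp, finset_sum_coeff]
      simp only [coeff_C_mul, coeff_X_pow, mul_ite, mul_one, mul_zero]
      rw [Finset.sum_ite_eq (Finset.range n) t]
      by_cases h : t < n
      · rw [if_pos (Finset.mem_range.mpr h)]
      · rw [if_neg (fun hh => h (Finset.mem_range.mp hh)), hf]
        simp only [dif_neg h]
    -- the recurrence gives vanishing of the high-but-below-n coefficients
    have hcode : ∀ (p : Polynomial (ZMod 2)) (k : ℕ), p.natDegree = k →
        (c ∈ PRcode k p n) → ∀ m, k ≤ m → m < n → (p * Cp).coeff m = 0 := by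
      intro p k hdk hc m hkm hmn
      rw [coeff_mul, Finset.Nat.sum_antidiagonal_eq_sum_range_succ_mk]
      have hsub : Finset.range (k + 1) ⊆ Finset.range (m + 1) := by
        apply Finset.range_subset_range.mpr; omega
      rw [← Finset.sum_subset hsub (by
        intro i hi hni
        rw [Finset.mem_range] at hi
        rw [Finset.mem_range] at hni
        have : p.coeff i = 0 := coeff_eq_zero_of_natDegree_lt (by omega)
        rw [this, zero_mul])]
      have hj := hc (n - 1 - m) (by omega)
      rw [← hj]
      apply Finset.sum_congr rfl
      intro i hi
      rw [Finset.mem_range] at hi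
      have hin : n - 1 - m + i < n := by omega
      rw [hCpcoeff]
      congr 1
      rw [hf]
      simp only
      rw [dif_pos (show m - i < n by omega), dif_pos hin]
      congr 1
      apply Fin.ext
      show n - 1 - (m - i) = n - 1 - m + i
      omega
    have hlow : ∀ m, m < n → (p1 * Cp).coeff m = 0 := by
      apply cancel_low p1 p2 k1 k2 n hmon1 hmon2 hdeg1 hdeg2 hirr1 hirr2 hk1 hk2 hne hnk
      · exact hcode p1 k1 hdeg1 hc1
      · exact hcode p2 k2 hdeg2 hc2
    have hCp0 : Cp = 0 := by
      apply elim_low p1 Cp hc01 n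
      · intro m hm
        rw [hCpcoeff, hf]
        simp only [dif_neg (by omega : ¬ m < n)]
      · exact hlow
    have hc0 : ∀ t : Fin n, c t = 0 := by
      intro t
      have ht : (t : ℕ) < n := t.isLt
      have := hCpcoeff (n - 1 - t)
      rw [hCp0, coeff_zero, hf] at this
      simp only [dif_pos (show n - 1 - (t : ℕ) < n by omega)] at this
      have heq : (⟨n - 1 - (n - 1 - (t : ℕ)), by omega⟩ : Fin n) = t := by
        apply Fin.ext
        simp only
        omega
      rw [heq] at this
      exact this.symm
    simp only [Set.mem_singleton_iff]
    funext t
    exact hc0 t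
  · rintro c hc
    simp only [Set.mem_singleton_iff] at hc
    subst hc
    constructor <;>
    · intro j hj
      apply Finset.sum_eq_zero
      intro i _
      split <;> simp
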